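/- Let a ∈ C²(ℝ) with a(s) ≥ ν > 0 for all s ∈ ℝ, let p > 1 and m > 0, and let g be the solution of g'(s) = 1/√(a(g(s))), g(0) = 0. For s > 0 define h(s) = g(s) g'(s) (g(s)^{p−1} − m) and K(s) = (h'(s) + s h''(s)) h(s) − s (h'(s))². Then for every s > 0, K(s) = (g'(s))³ [ (g(s)^{p−1} − m)² 𝓗₁(s) + m(p−1)(g(s)^{p−1} − m) 𝓗₂(s) − m² s (p−1)² g'(s) ], where 𝓗₁(s) = −(1/2) a''(g(s)) s g(s)² (g'(s))³ + (3/4)(a'(g(s)))² s g(s)² (g'(s))⁵ − (1/2) a'(g(s)) g(s) (g'(s))² (p s g'(s) + g(s)) − p s g'(s) + p g(s) and 𝓗₂(s) = −(1/2) a'(g(s)) s g(s) (g'(s))³ + g(s) − p s g'(s). -/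

import Mathlib

open Filter Real Topology

theorem K_decomposition
    (a : ℝ → ℝ) (ν : ℝ) (hν : 0 < ν)
    (ha : ContDiff ℝ 2 a) (hbound : ∀ s, ν ≤ a s)
    (p m : ℝ) (hp : 1 < p) (hm : 0 < m)
    (g : ℝ → ℝ)
    (hg : ∀ s, HasDerivAt g (1 / Real.sqrt (a (g s))) s) (hg0 : g 0 = 0)
    (h K H₁ H₂ : ℝ → ℝ)
    (hh : ∀ s > (0 : ℝ), h s = g s * deriv g s * (g s ^ (p - 1) - m))
    (hK : ∀ s > (0 : ℝ),
      K s = (deriv h s + s * deriv (deriv h) s) * h s - s * (deriv h s) ^ 2)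
    (hH₁ : ∀ s > (0 : ℝ),
      H₁ s = -(1 / 2) * deriv (deriv a) (g s) * s * (g s) ^ 2 * (deriv g s) ^ 3
        + (3 / 4) * (deriv a (g s)) ^ 2 * s * (g s) ^ 2 * (deriv g s) ^ 5
        - (1 / 2) * deriv a (g s) * g s * (deriv g s) ^ 2 * (p * s * deriv g s + g s)
        - p * s * deriv g s + p * g s)
    (hH₂ : ∀ s > (0 : ℝ),
      H₂ s = -(1 / 2) * deriv a (g s) * s * g s * (deriv g s) ^ 3
        + g s - p * s * deriv g s) :
    ∀ s > (0 : ℝ),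
      K s = (deriv g s) ^ 3 *
        ((g s ^ (p - 1) - m) ^ 2 * H₁ s
          + m * (p - 1) * (g s ^ (p - 1) - m) * H₂ s
          - m ^ 2 * s * (p - 1) ^ 2 * deriv g s) := by
  have hapos : ∀ x, 0 < a x := fun x => lt_of_lt_of_le hν (hbound x)
  set dg : ℝ → ℝ := fun s => 1 / Real.sqrt (a (g s)) with hdg_def
  have hderivg : deriv g = dg := funext fun x => (hg x).deriv
  have hdgpos : ∀ x, 0 < dg x := fun x => by
    have : 0 < Real.sqrt (a (g x)) := Real.sqrt_pos.mpr (hapos _)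
    positivity
  have hmono : StrictMono g := strictMono_of_deriv_pos (fun x => by
    rw [hderivg]; exact hdgpos x)
  have hGpos : ∀ x, 0 < x → 0 < g x := fun x hx => by
    have := hmono hx; rwa [hg0] at this
  have hadiff : Differentiable ℝ a := ha.differentiable (by norm_num)
  have hb : ContDiff ℝ 1 (deriv a) := by
    have h2 : ContDiff ℝ ((1 : ℕ) + 1) a := by exact_mod_cast ha
    exact (contDiff_succ_iff_deriv.mp h2).2.2
  have hbdiff : Differentiable ℝ (deriv a) := hb.differentiable one_ne_zero
  -- derivative of a ∘ g
  have hAc : ∀ x, HasDerivAt (fun y => a (g y)) (deriv a (g x) * dg x) x := fun x =>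
    ((hadiff (g x)).hasDerivAt).comp x (hg x)
  -- derivative of dg
  have hdg' : ∀ x, HasDerivAt dg (-(1 / 2) * deriv a (g x) * dg x ^ 4) x := fun x => by
    have hA : (0:ℝ) < a (g x) := hapos (g x)
    have hsq : Real.sqrt (a (g x)) ≠ 0 := ne_of_gt (Real.sqrt_pos.mpr hA)
    have h1 : HasDerivAt (fun y => Real.sqrt (a (g y)))
        (1 / (2 * Real.sqrt (a (g x))) * (deriv a (g x) * dg x)) x :=
      (Real.hasDerivAt_sqrt (ne_of_gt hA)).comp x (hAc x)
    have h2 := h1.inv hsq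
    have h3 : HasDerivAt dg
        (-(1 / (2 * Real.sqrt (a (g x))) * (deriv a (g x) * dg x)) /
          Real.sqrt (a (g x)) ^ 2) x := by
      simpa [hdg_def, one_div, Pi.inv_def] using h2
    have hv : dg x = 1 / Real.sqrt (a (g x)) := rfl
    have hval : -(1 / (2 * Real.sqrt (a (g x))) * (deriv a (g x) * dg x)) /
          Real.sqrt (a (g x)) ^ 2 = -(1 / 2) * deriv a (g x) * dg x ^ 4 := by
      rw [hv]; ring
    rwa [hval] at h3
  -- derivative of deriv a ∘ g
  have hB : ∀ x, HasDerivAt (fun y => deriv a (g y)) (deriv (deriv a) (g x) * dg x) x :=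
    fun x => ((hbdiff (g x)).hasDerivAt).comp x (hg x)
  -- rpow derivatives
  have ht : ∀ x, 0 < x → HasDerivAt (fun y => g y ^ (p - 1))
      (dg x * (p - 1) * g x ^ (p - 2)) x := fun x hx => by
    have h1 := (hg x).rpow_const (p := p - 1) (Or.inl (hGpos x hx).ne')
    have e : p - 1 - 1 = p - 2 := by ring
    rwa [e] at h1
  have ht2 : ∀ x, 0 < x → HasDerivAt (fun y => g y ^ (p - 2))
      (dg x * (p - 2) * g x ^ (p - 3)) x := fun x hx => by
    have h1 := (hg x).rpow_const (p := p - 2) (Or.inl (hGpos x hx).ne')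
    have e : p - 2 - 1 = p - 3 := by ring
    rwa [e] at h1
  -- first derivative of h (as function F on positive reals)
  set F : ℝ → ℝ := fun x =>
      (dg x * dg x + g x * (-(1 / 2) * deriv a (g x) * dg x ^ 4)) * (g x ^ (p - 1) - m)
        + g x * dg x * (dg x * (p - 1) * g x ^ (p - 2)) with hFdef
  have hhF : ∀ x, 0 < x →
      HasDerivAt (fun y => g y * dg y * (g y ^ (p - 1) - m)) (F x) x := fun x hx =>
    ((hg x).mul (hdg' x)).mul ((ht x hx).sub_const m)
  have heqx : ∀ x, 0 < x → h =ᶠ[𝓝 x] fun y => g y * dg y * (g y ^ (p - 1) - m) := by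
    intro x hx
    filter_upwards [isOpen_Ioi.mem_nhds (show x ∈ Set.Ioi (0:ℝ) from hx)] with y hy
    rw [hh y hy, hderivg]
  intro s hs
  have hd1 : deriv h s = F s := ((hhF s hs).congr_of_eventuallyEq (heqx s hs)).deriv
  have derivh_eq : deriv h =ᶠ[𝓝 s] F := by
    filter_upwards [isOpen_Ioi.mem_nhds (show s ∈ Set.Ioi (0:ℝ) from hs)] with x hx
    exact ((hhF x hx).congr_of_eventuallyEq (heqx x hx)).deriv
  -- second derivative
  have hF' :=
    ((((hdg' s).mul (hdg' s)).add
        ((hg s).mul (((hB s).const_mul (-(1/2) : ℝ)).mul ((hdg' s).pow 4)))).mul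
      ((ht s hs).sub_const m)).add
    ((((hg s).mul (hdg' s)).mul (((hdg' s).mul_const (p - 1)).mul (ht2 s hs))))
  have hF'' : HasDerivAt F _ s := hF'
  have hd2 := (Filter.EventuallyEq.deriv_eq derivh_eq).trans hF''.deriv
  -- algebra
  have hG : (0:ℝ) < g s := hGpos s hs
  have e2 : g s ^ (p - 2) = g s ^ (p - 1) / g s := by
    rw [eq_div_iff hG.ne', ← Real.rpow_add_one hG.ne']
    congr 1; ring
  have e3 : g s ^ (p - 3) = g s ^ (p - 1) / (g s * g s) := by
    rw [eq_div_iff (by positivity), ← mul_assoc, ← Real.rpow_add_one hG.ne',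
      ← Real.rpow_add_one hG.ne']
    congr 1; ring
  rw [hK s hs, hh s hs, hH₁ s hs, hH₂ s hs, hderivg, hd1, hd2, hFdef]
  simp only [Pi.mul_apply, Pi.add_apply, Pi.pow_apply, Pi.sub_apply]
  rw [e2, e3]
  set T := g s ^ (p - 1) with hT
  field_simp
  ring
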